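/- Let G be a finite k-regular bipartite graph, k ≥ 2, and let m be a positive integer. Choose K odd with m ≤ ((k+1)/k)(1 + (K−1)/(2k)). If M is a matching in G with no augmenting paths of length ≤ K, then the set Y_0 of M-uncovered vertices satisfies m·|Y_0| ≤ |A ∪ B|, i.e., the number of uncovered vertices is at most |V|/m. -/

import Mathlib

variable {V : Type*}

/-- The list of edges of a path given by its list of vertices. -/
def pathEdges (p : List V) : List (Sym2 V) :=
  List.zipWith (fun a b => s(a, b)) p p.tail

/-- `M` is a matching in `G`: a set of edges of `G` no two of which share a vertex. -/
def IsMatching (G : SimpleGraph V) (M : Set (Sym2 V)) : Prop :=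
  M ⊆ G.edgeSet ∧ ∀ e ∈ M, ∀ f ∈ M, e ≠ f → ∀ v : V, v ∈ e → v ∉ f

/-- A vertex is covered by `M` if it is incident with some edge of `M`. -/
def Covered (M : Set (Sym2 V)) (v : V) : Prop :=
  ∃ e ∈ M, v ∈ e

/-- `p` (a list of vertices) is an augmenting path for the matching `M` in `G`:
a simple path whose edges alternate out of/in `M` (starting and ending with a
non-matching edge, so it has an odd number of edges, i.e. an even number of
vertices) and whose endpoints are uncovered by `M`. -/
def IsAugPath (G : SimpleGraph V) (M : Set (Sym2 V)) (p : List V) : Prop :=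
  p.Nodup ∧ p.Chain' G.Adj ∧ 2 ≤ p.length ∧ p.length % 2 = 0 ∧
  (∀ (i : ℕ) (h : i < (pathEdges p).length),
      ((pathEdges p).get ⟨i, h⟩ ∈ M ↔ i % 2 = 1)) ∧
  (∀ v : V, p.head? = some v ∨ p.getLast? = some v → ¬ Covered M v)

open scoped Classical

/-- Graph neighbourhood of a finite set of vertices. -/
noncomputable def NG [Fintype V] (G : SimpleGraph V) (S : Finset V) : Finset V :=
  Finset.univ.filter fun v => ∃ u ∈ S, G.Adj u v

/-- Set of `M`-partners of a finite set of vertices. -/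
noncomputable def NM [Fintype V] (M : Set (Sym2 V)) (S : Finset V) : Finset V :=
  Finset.univ.filter fun v => ∃ u ∈ S, s(u, v) ∈ M

/-- The set of vertices not covered by `M`. -/
noncomputable def uncov [Fintype V] (M : Set (Sym2 V)) : Finset V :=
  Finset.univ.filter fun v => ¬ Covered M v

/-- The sequence `Y_0 = ` uncovered vertices, `Y_i = N_G(Y_{i-1})` for odd `i`,
`Y_i = N_M(Y_{i-1})` for even `i > 0`. -/
noncomputable def Ychain [Fintype V] (G : SimpleGraph V) (M : Set (Sym2 V)) : ℕ → Finset V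
  | 0 => uncov M
  | i + 1 => if (i + 1) % 2 = 1 then NG G (Ychain G M i) else NM M (Ychain G M i)

lemma pathEdges_length (p : List V) : (pathEdges p).length = p.length - 1 := by
  simp [pathEdges]

lemma pathEdges_get (p : List V) (l : ℕ) (h : l < (pathEdges p).length) :
    (pathEdges p).get ⟨l, h⟩ =
      s(p[l]'(by rw [pathEdges_length] at h; omega),
        p[l+1]'(by rw [pathEdges_length] at h; omega)) := by
  simp only [pathEdges, List.get_eq_getElem, List.getElem_zipWith, List.getElem_tail]

lemma getElemCongr (p : List V) {a b : ℕ} (hab : a = b) {ha : a < p.length} :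
    p[a]'ha = p[b]'(hab ▸ ha) := by subst hab; rfl

/-- Alternating walk: chain of adjacencies, vertices on the proper sides,
edges alternately out of / in `M`. -/
def AltW (G : SimpleGraph V) (M : Set (Sym2 V)) (A B : Finset V) (p : List V) : Prop :=
  p.Chain' G.Adj ∧
  (∀ (l : ℕ) (h : l < p.length), (l % 2 = 0 → p[l] ∈ A) ∧ (l % 2 = 1 → p[l] ∈ B)) ∧
  (∀ (l : ℕ) (h : l < (pathEdges p).length), ((pathEdges p).get ⟨l, h⟩ ∈ M ↔ l % 2 = 1))

lemma reduce {G : SimpleGraph V} {M : Set (Sym2 V)} {A B : Finset V}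
    (hAB : ∀ v : V, ¬(v ∈ A ∧ v ∈ B)) :
    ∀ (n : ℕ) (p : List V), p.length ≤ n → AltW G M A B p → p.length % 2 = 0 →
      ∀ (hne : p ≠ []), ¬ Covered M (p.head hne) → ¬ Covered M (p.getLast hne) →
      ∃ q : List V, IsAugPath G M q ∧ q.length ≤ p.length := by
  intro n
  induction n using Nat.strong_induction_on with
  | _ n IH =>
  intro p hpn hW hpar hne hhd hlt
  obtain ⟨hch, hsd, hal⟩ := hW
  by_cases hnd : p.Nodup
  · refine ⟨p, ⟨hnd, hch, ?_, hpar, hal, ?_⟩, le_refl _⟩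
    · have h0 : p.length ≠ 0 := fun h => hne (List.length_eq_zero_iff.mp h)
      omega
    · intro v hv
      rcases hv with hv | hv
      · rw [List.head?_eq_head hne, Option.some_inj] at hv
        exact hv ▸ hhd
      · rw [List.getLast?_eq_getLast hne, Option.some_inj] at hv
        exact hv ▸ hlt
  · obtain ⟨i, j, hi, hj, hij, heq⟩ :
        ∃ (i j : ℕ) (_ : i < p.length) (_ : j < p.length),
          i < j ∧ p[i]'(by assumption) = p[j]'(by assumption) := by
      rw [List.nodup_iff_injective_get] at hnd
      simp only [Function.Injective, not_forall] at hnd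
      obtain ⟨a, b, hab, hne2⟩ := hnd
      rcases Nat.lt_or_ge a.val b.val with h | h
      · exact ⟨a.val, b.val, a.isLt, b.isLt, h, by simpa [List.get_eq_getElem] using hab⟩
      · have hba : b.val < a.val := by
          rcases Nat.eq_or_lt_of_le h with h' | h'
          · exact absurd (Fin.ext h'.symm) hne2
          · exact h'
        exact ⟨b.val, a.val, b.isLt, a.isLt, hba,
          by simpa [List.get_eq_getElem] using hab.symm⟩
    have hpar2 : i % 2 = j % 2 := by
      by_contra hc
      have h1 := hsd i hi
      have h2 := hsd j hj
      rcases (by omega : (i % 2 = 0 ∧ j % 2 = 1) ∨ (i % 2 = 1 ∧ j % 2 = 0)) with ⟨e1, e2⟩ | ⟨e1, e2⟩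
      · exact hAB (p[j]'hj) ⟨heq ▸ h1.1 e1, h2.2 e2⟩
      · exact hAB (p[j]'hj) ⟨h2.1 e2, heq ▸ h1.2 e1⟩
    have hd2 : (j - i) % 2 = 0 := by omega
    set q := p.take (i+1) ++ p.drop (j+1) with hq
    have hlt' : (p.take (i+1)).length = i + 1 := by rw [List.length_take]; omega
    have hqlen : q.length = p.length - (j - i) := by
      rw [hq, List.length_append, hlt', List.length_drop]; omega
    have hget1 : ∀ (l : ℕ) (h : l < q.length), l ≤ i → q[l]'h = p[l]'(by omega) := by
      intro l h hl
      simp only [hq]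
      rw [List.getElem_append_left (by rw [hlt']; omega)]
      simp [List.getElem_take]
    have hget2 : ∀ (l : ℕ) (h : l < q.length), i ≤ l →
        q[l]'h = p[l + (j - i)]'(by omega) := by
      intro l h hl
      rcases Nat.eq_or_lt_of_le hl with heqil | hl'
      · rw [hget1 l h heqil.ge]
        have e1 : p[l]'(by omega) = p[i]'hi := getElemCongr p heqil.symm
        rw [e1, heq]
        exact getElemCongr p (by omega)
      · simp only [hq]
        rw [List.getElem_append_right (by rw [hlt']; omega)]
        rw [List.getElem_drop]
        exact getElemCongr p (by rw [hlt']; omega)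
    have hqne : q ≠ [] := List.length_pos_iff.mp (by omega)
    have hchq : q.Chain' G.Adj := by
      apply List.isChain_iff_getElem.mpr
      intro l h
      have hchp := List.isChain_iff_getElem.mp hch
      rcases Nat.lt_or_ge l i with hli | hli
      · rw [hget1 l (by omega) (by omega), hget1 (l+1) (by omega) (by omega)]
        have := hchp l (by omega)
        simpa using this
      · rw [hget2 l (by omega) hli, hget2 (l+1) (by omega) (by omega)]
        have h2 := hchp (l + (j - i)) (by omega)
        have e : (p[l+1+(j-i)]'(by omega)) = (p[(l+(j-i))+1]'(by omega)) :=
          getElemCongr p (by omega)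
        rw [e]
        exact h2
    have hsdq : ∀ (l : ℕ) (h : l < q.length),
        (l % 2 = 0 → q[l]'h ∈ A) ∧ (l % 2 = 1 → q[l]'h ∈ B) := by
      intro l h
      rcases Nat.lt_or_ge l i with hli | hli
      · rw [hget1 l h (by omega)]
        exact hsd l (by omega)
      · rw [hget2 l h hli]
        have h2 := hsd (l + (j - i)) (by omega)
        exact ⟨fun h0 => h2.1 (by omega), fun h1 => h2.2 (by omega)⟩
    have halq : ∀ (l : ℕ) (h : l < (pathEdges q).length),
        ((pathEdges q).get ⟨l, h⟩ ∈ M ↔ l % 2 = 1) := by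
      intro l h
      have hql : l < q.length - 1 := by rw [pathEdges_length] at h; omega
      rw [pathEdges_get]
      rcases Nat.lt_or_ge l i with hli | hli
      · rw [hget1 l (by omega) (by omega), hget1 (l+1) (by omega) (by omega)]
        have h2 := hal l (by rw [pathEdges_length]; omega)
        rw [pathEdges_get] at h2
        exact h2
      · rw [hget2 l (by omega) hli, hget2 (l+1) (by omega) (by omega)]
        have h2 := hal (l + (j - i)) (by rw [pathEdges_length]; omega)
        rw [pathEdges_get] at h2
        have e : (p[l+1+(j-i)]'(by omega)) = (p[(l+(j-i))+1]'(by omega)) :=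
          getElemCongr p (by omega)
        rw [e, h2]
        omega
    have hq0 : q.head hqne = p.head hne := by
      rw [List.head_eq_getElem, List.head_eq_getElem]
      exact hget1 0 (by omega) (by omega)
    have hqlast : q.getLast hqne = p.getLast hne := by
      rw [List.getLast_eq_getElem, List.getLast_eq_getElem]
      rw [hget2 (q.length - 1) (by omega) (by omega)]
      exact getElemCongr p (by omega)
    obtain ⟨r, hr, hrlen⟩ := IH q.length (by omega) q le_rfl ⟨hchq, hsdq, halq⟩
      (by omega) hqne (by rw [hq0]; exact hhd) (by rw [hqlast]; exact hlt)
    exact ⟨r, hr, by omega⟩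

lemma head_append_single {p : List V} (hne : p ≠ []) (w : V) (h : p ++ [w] ≠ []) :
    (p ++ [w]).head h = p.head hne := by
  rw [List.head_eq_getElem, List.head_eq_getElem]
  exact List.getElem_append_left (List.length_pos_iff.mpr hne)

lemma getLast_append_single (p : List V) (w : V) (h : p ++ [w] ≠ []) :
    (p ++ [w]).getLast h = w := by
  rw [List.getLast_eq_getElem]
  have e : (p ++ [w])[(p ++ [w]).length - 1]'(by simp) = (p ++ [w])[p.length]'(by simp) :=
    getElemCongr _ (by simp)
  rw [e, List.getElem_append_right le_rfl]
  simp

lemma AltW_append {G : SimpleGraph V} {M : Set (Sym2 V)} {A B : Finset V}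
    (hAB : ∀ v : V, ¬(v ∈ A ∧ v ∈ B))
    (hbip : ∀ u v : V, G.Adj u v → (u ∈ A ∧ v ∈ B) ∨ (u ∈ B ∧ v ∈ A))
    {p : List V} (hne : p ≠ []) (hW : AltW G M A B p) {w : V}
    (hadj : G.Adj (p.getLast hne) w)
    (hmem : s(p.getLast hne, w) ∈ M ↔ (p.length - 1) % 2 = 1) :
    AltW G M A B (p ++ [w]) := by
  obtain ⟨hch, hsd, hal⟩ := hW
  have hL : 1 ≤ p.length := List.length_pos_iff.mpr hne
  have hlen : (p ++ [w]).length = p.length + 1 := by simp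
  have hga : ∀ (l : ℕ) (h : l < p.length), (p ++ [w])[l]'(by simp; omega) = p[l]'h :=
    fun l h => List.getElem_append_left h
  have hgw : (p ++ [w])[p.length]'(by simp) = w := by
    rw [List.getElem_append_right le_rfl]; simp
  have hlst : p.getLast hne = p[p.length - 1]'(by omega) := List.getLast_eq_getElem hne
  have hws : (p.length % 2 = 0 → w ∈ A) ∧ (p.length % 2 = 1 → w ∈ B) := by
    have hbw := hbip _ _ hadj
    have hsd' := hsd (p.length - 1) (by omega)
    by_cases hp : (p.length - 1) % 2 = 0
    · have hA : p.getLast hne ∈ A := by rw [hlst]; exact hsd'.1 hp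
      rcases hbw with ⟨_, hwB⟩ | ⟨hB, _⟩
      · exact ⟨fun h0 => absurd h0 (by omega), fun _ => hwB⟩
      · exact absurd ⟨hA, hB⟩ (hAB _)
    · have hB : p.getLast hne ∈ B := by rw [hlst]; exact hsd'.2 (by omega)
      rcases hbw with ⟨hA, _⟩ | ⟨_, hwA⟩
      · exact absurd ⟨hA, hB⟩ (hAB _)
      · exact ⟨fun _ => hwA, fun h1 => absurd h1 (by omega)⟩
  refine ⟨?_, ?_, ?_⟩
  · apply List.isChain_iff_getElem.mpr
    intro l h
    rw [hlen] at h
    rcases Nat.lt_or_ge (l + 1) p.length with hl | hl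
    · rw [hga l (by omega), hga (l+1) hl]
      have := List.isChain_iff_getElem.mp hch l (by omega)
      simpa using this
    · have hl1 : l + 1 = p.length := by omega
      have e : (p ++ [w])[l+1]'(by simp; omega) = (p ++ [w])[p.length]'(by simp) :=
        getElemCongr _ hl1
      rw [e, hgw, hga l (by omega)]
      have e2 : p[l]'(by omega) = p[p.length - 1]'(by omega) := getElemCongr p (by omega)
      rw [e2, ← hlst]
      exact hadj
  · intro l h
    rw [hlen] at h
    rcases Nat.lt_or_ge l p.length with hl | hl
    · rw [hga l hl]
      exact hsd l hl
    · have hl1 : l = p.length := by omega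
      have e : (p ++ [w])[l]'(by simp; omega) = (p ++ [w])[p.length]'(by simp) :=
        getElemCongr _ hl1
      rw [e, hgw]
      exact ⟨fun h0 => hws.1 (by omega), fun h1 => hws.2 (by omega)⟩
  · intro l h
    have hl' : l < p.length := by
      rw [pathEdges_length] at h
      simp at h; omega
    rw [pathEdges_get]
    rcases Nat.lt_or_ge (l + 1) p.length with hl | hl
    · rw [hga l (by omega), hga (l+1) hl]
      have h2 := hal l (by rw [pathEdges_length]; omega)
      rw [pathEdges_get] at h2
      exact h2
    · have hl1 : l + 1 = p.length := by omega
      have e : (p ++ [w])[l+1]'(by simp; omega) = (p ++ [w])[p.length]'(by simp) :=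
        getElemCongr _ hl1
      rw [e, hgw, hga l (by omega)]
      have e2 : p[l]'(by omega) = p[p.length - 1]'(by omega) := getElemCongr p (by omega)
      rw [e2, ← hlst, hmem]
      omega

lemma AltW_singleton {G : SimpleGraph V} {M : Set (Sym2 V)} {A B : Finset V}
    {v : V} (hv : v ∈ A) : AltW G M A B [v] := by
  refine ⟨List.isChain_singleton v, ?_, ?_⟩
  · intro l h
    simp only [List.length_singleton] at h
    have : l = 0 := by omega
    subst this
    exact ⟨fun _ => hv, fun h1 => by omega⟩
  · intro l h
    rw [pathEdges_length] at h
    simp at h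

open scoped Classical

lemma card_le_card_NG [Fintype V] (G : SimpleGraph V) [DecidableRel G.Adj]
    {k : ℕ} (hk : 0 < k) (hreg : ∀ v : V, G.degree v = k) (S : Finset V) :
    S.card ≤ (NG G S).card := by
  classical
  have key : k * S.card ≤ k * (NG G S).card := by
    calc k * S.card = ∑ _v ∈ S, k := by rw [Finset.sum_const, smul_eq_mul, mul_comm]
    _ = ∑ v ∈ S, ∑ w ∈ NG G S, if G.Adj v w then 1 else 0 := by
        apply Finset.sum_congr rfl
        intro v hv
        rw [← Finset.card_filter]
        have hfe : (NG G S).filter (fun w => G.Adj v w) = G.neighborFinset v := by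
          ext w
          simp only [Finset.mem_filter, SimpleGraph.mem_neighborFinset, NG,
            Finset.mem_univ, true_and]
          exact ⟨fun h => h.2, fun h => ⟨⟨v, hv, h⟩, h⟩⟩
        rw [hfe]
        exact (hreg v).symm
    _ = ∑ w ∈ NG G S, ∑ v ∈ S, if G.Adj v w then 1 else 0 := Finset.sum_comm
    _ ≤ ∑ _w ∈ NG G S, k := by
        apply Finset.sum_le_sum
        intro w _
        rw [← Finset.card_filter]
        calc (S.filter (fun v => G.Adj v w)).card ≤ (G.neighborFinset w).card := by
              apply Finset.card_le_card
              intro v hv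
              simp only [Finset.mem_filter] at hv
              simp only [SimpleGraph.mem_neighborFinset]
              exact hv.2.symm
        _ = k := hreg w
    _ = k * (NG G S).card := by rw [Finset.sum_const, smul_eq_mul, mul_comm]
  exact Nat.le_of_mul_le_mul_left key hk

lemma card_le_card_NM [Fintype V] {G : SimpleGraph V} {M : Set (Sym2 V)} (hM : IsMatching G M)
    (S : Finset V) (hcov : ∀ v ∈ S, Covered M v) : S.card ≤ (NM M S).card := by
  classical
  have hf : ∀ v : V, ∃ w, v ∈ S → s(v, w) ∈ M := by
    intro v
    by_cases hv : v ∈ S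
    · obtain ⟨e, heM, hve⟩ := hcov v hv
      exact ⟨Sym2.Mem.other' hve, fun _ => by rwa [Sym2.other_spec' hve]⟩
    · exact ⟨v, fun h => absurd h hv⟩
  choose f hfs using hf
  apply Finset.card_le_card_of_injOn f
  · intro v hv
    simp only [Finset.mem_coe, NM, Finset.mem_filter, Finset.mem_univ, true_and]
    exact ⟨v, hv, hfs v hv⟩
  · intro v1 h1 v2 h2 heqf
    simp only [Finset.mem_coe] at h1 h2
    have e1 := hfs v1 h1
    have e2 := hfs v2 h2
    rw [heqf] at e1
    by_contra hne
    by_cases hee : s(v1, f v2) = s(v2, f v2)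
    · rw [Sym2.eq_iff] at hee
      rcases hee with ⟨h, _⟩ | ⟨ha, hb⟩
      · exact hne h
      · exact hne (ha.trans hb)
    · exact hM.2 _ e1 _ e2 hee (f v2) (Sym2.mem_mk_right _ _) (Sym2.mem_mk_right _ _)

lemma growth [Fintype V] [DecidableEq V] (G : SimpleGraph V) [DecidableRel G.Adj]
    (A B : Finset V)
    (hAB : ∀ v : V, ¬(v ∈ A ∧ v ∈ B))
    (hbip : ∀ u v : V, G.Adj u v → (u ∈ A ∧ v ∈ B) ∨ (u ∈ B ∧ v ∈ A))
    {k : ℕ} (hk : 0 < k) (hreg : ∀ v : V, G.degree v = k) (t : ℕ)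
    (M : Set (Sym2 V)) (hM : IsMatching G M)
    (hno : ∀ p : List V, IsAugPath G M p → ¬(p.length ≤ 2*t + 2)) :
    ∃ T : Finset V, T ⊆ A ∧ (t+1) * ((uncov M).filter (· ∈ A)).card ≤ T.card := by
  classical
  set U : Finset V := (uncov M).filter (· ∈ A) with hU
  let S : ℕ → Finset V := fun i => Nat.rec U (fun _ T => T ∪ NM M (NG G T)) i
  have hS0 : S 0 = U := rfl
  have hSs : ∀ i, S (i+1) = S i ∪ NM M (NG G (S i)) := fun _ => rfl
  have hUsub : ∀ i, U ⊆ S i := by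
    intro i
    induction i with
    | zero => exact hS0 ▸ subset_rfl
    | succ i ih => rw [hSs]; exact ih.trans Finset.subset_union_left
  have key : ∀ i, i ≤ t →
      (∀ v ∈ S i, ∃ (p : List V) (hne : p ≠ []), AltW G M A B p ∧
        ¬ Covered M (p.head hne) ∧ p.getLast hne = v ∧ p.length % 2 = 1 ∧
        p.length ≤ 2*i+1) ∧
      (i+1) * U.card ≤ (S i).card := by
    intro i
    induction i with
    | zero =>
      intro _
      constructor
      · intro v hv
        rw [hS0, hU] at hv
        simp only [Finset.mem_filter, uncov, Finset.mem_univ, true_and] at hv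
        refine ⟨[v], by simp, AltW_singleton hv.2, ?_, by simp, by simp, by simp⟩
        simpa using hv.1
      · rw [hS0]; simp
    | succ i ih =>
      intro hit
      obtain ⟨inv, hcard⟩ := ih (by omega)
      have hcov : ∀ w ∈ NG G (S i), Covered M w := by
        intro w hw
        by_contra hwc
        simp only [NG, Finset.mem_filter, Finset.mem_univ, true_and] at hw
        obtain ⟨v, hv, hadj⟩ := hw
        obtain ⟨p, hne, hWp, hhd, hlast, hpodd, hplen⟩ := inv v hv
        have hvw : s(v, w) ∉ M := fun hmem => hwc ⟨_, hmem, Sym2.mem_mk_right v w⟩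
        have hW2 : AltW G M A B (p ++ [w]) :=
          AltW_append hAB hbip hne hWp (by rw [hlast]; exact hadj)
            (by rw [hlast]; exact iff_of_false hvw (by omega))
        have hne2 : p ++ [w] ≠ [] := by simp
        obtain ⟨r, hr, hrlen⟩ := reduce hAB (p.length + 1) (p ++ [w]) (by simp)
          hW2 (by simp; omega) hne2
          (by rw [head_append_single hne w hne2]; exact hhd)
          (by rw [getLast_append_single p w hne2]; exact hwc)
        refine hno r hr ?_
        simp only [List.length_append, List.length_cons, List.length_nil] at hrlen
        omega
      have hng := card_le_card_NG G hk hreg (S i)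
      have hnm := card_le_card_NM hM (NG G (S i)) hcov
      have hdisj : Disjoint U (NM M (NG G (S i))) := by
        rw [Finset.disjoint_left]
        intro a haU haN
        simp only [NM, Finset.mem_filter, Finset.mem_univ, true_and] at haN
        obtain ⟨u', hu', hm⟩ := haN
        simp only [hU, uncov, Finset.mem_filter, Finset.mem_univ, true_and] at haU
        exact haU.1 ⟨_, hm, Sym2.mem_mk_right u' a⟩
      have hsub : U ∪ NM M (NG G (S i)) ⊆ S (i+1) := by
        rw [hSs]
        exact Finset.union_subset_union (hUsub i) (subset_refl _)
      have hmid : (i+1) * U.card ≤ (NM M (NG G (S i))).card :=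
        le_trans hcard (le_trans hng hnm)
      have hstep : (i+1+1) * U.card ≤ (S (i+1)).card := by
        calc (i+1+1) * U.card = U.card + (i+1) * U.card := by ring
        _ ≤ U.card + (NM M (NG G (S i))).card := Nat.add_le_add_left hmid _
        _ = (U ∪ NM M (NG G (S i))).card := (Finset.card_union_of_disjoint hdisj).symm
        _ ≤ (S (i+1)).card := Finset.card_le_card hsub
      refine ⟨?_, hstep⟩
      intro v' hv'
      rw [hSs] at hv'
      rcases Finset.mem_union.mp hv' with h | h
      · obtain ⟨p, hne, hWp, hhd, hlast, hpodd, hplen⟩ := inv v' h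
        exact ⟨p, hne, hWp, hhd, hlast, hpodd, by omega⟩
      · simp only [NM, Finset.mem_filter, Finset.mem_univ, true_and] at h
        obtain ⟨w, hw, hm⟩ := h
        simp only [NG, Finset.mem_filter, Finset.mem_univ, true_and] at hw
        obtain ⟨v, hv, hadj⟩ := hw
        obtain ⟨p, hne, hWp, hhd, hlast, hpodd, hplen⟩ := inv v hv
        by_cases hvw : s(v, w) ∈ M
        · have hee : s(v, w) = s(w, v') := by
            by_contra hne2
            exact hM.2 _ hvw _ hm hne2 w (Sym2.mem_mk_right v w) (Sym2.mem_mk_left w v')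
          rw [Sym2.eq_iff] at hee
          have hvv : v = v' := by
            rcases hee with ⟨h1, h2⟩ | ⟨h1, _⟩
            · exact h1.trans h2
            · exact h1
          exact ⟨p, hne, hWp, hhd, hvv ▸ hlast, hpodd, by omega⟩
        · have hne2 : p ++ [w] ≠ [] := by simp
          have hW2 : AltW G M A B (p ++ [w]) :=
            AltW_append hAB hbip hne hWp (by rw [hlast]; exact hadj)
              (by rw [hlast]; exact iff_of_false hvw (by omega))
          have hlast2 : (p ++ [w]).getLast hne2 = w := getLast_append_single p w hne2
          have hadj2 : G.Adj w v' := (SimpleGraph.mem_edgeSet G).mp (hM.1 hm)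
          have hlen2 : (p ++ [w]).length = p.length + 1 := by simp
          have hW3 : AltW G M A B (p ++ [w] ++ [v']) :=
            AltW_append hAB hbip hne2 hW2 (by rw [hlast2]; exact hadj2)
              (by rw [hlast2, hlen2]; exact iff_of_true hm (by omega))
          have hne3 : p ++ [w] ++ [v'] ≠ [] := by simp
          refine ⟨p ++ [w] ++ [v'], hne3, hW3, ?_, ?_, ?_, ?_⟩
          · rw [head_append_single hne2 v' hne3, head_append_single hne w hne2]
            exact hhd
          · exact getLast_append_single _ v' hne3
          · simp only [List.length_append, List.length_cons, List.length_nil]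
            omega
          · simp only [List.length_append, List.length_cons, List.length_nil]
            omega
  obtain ⟨inv, hcard⟩ := key t le_rfl
  refine ⟨S t, ?_, hcard⟩
  intro v hv
  obtain ⟨p, hne, ⟨hch, hsd, hal⟩, hhd, hlast, hpodd, hplen⟩ := inv v hv
  have hA := (hsd (p.length - 1) (by omega)).1 (by omega)
  rw [List.getLast_eq_getElem] at hlast
  rw [hlast] at hA
  exact hA


/-- in a finite `k`-regular bipartite graph (`k ≥ 2`), if `K` is odd
with `m ≤ ((k+1)/k)(1 + (K-1)/(2k))` and `M` is a matching with no augmenting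
paths of length `≤ K` (edges), then `m·|Y_0| ≤ |V|` where `Y_0` is the set of
`M`-uncovered vertices. -/
theorem card_uncovered_le [Fintype V] [DecidableEq V]
    (G : SimpleGraph V) [DecidableRel G.Adj] (A B : Finset V)
    (hpart : ∀ v : V, v ∈ A ∨ v ∈ B) (hAB : ∀ v : V, ¬(v ∈ A ∧ v ∈ B))
    (hbip : ∀ u v : V, G.Adj u v → (u ∈ A ∧ v ∈ B) ∨ (u ∈ B ∧ v ∈ A))
    (k : ℕ) (hk : 2 ≤ k) (hreg : ∀ v : V, G.degree v = k)
    (m : ℕ) (hm : 0 < m)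
    (K : ℕ) (hK : K % 2 = 1)
    (hmK : 2 * k * k * m ≤ (k + 1) * (2 * k + (K - 1)))
    (M : Set (Sym2 V)) (hM : IsMatching G M)
    (hno : ∀ p : List V, IsAugPath G M p → ¬(p.length ≤ K + 1)) :
    m * (uncov M).card ≤ Fintype.card V := by
  classical
  set t := K / 2 with ht
  have hK2 : K = 2 * t + 1 := by omega
  have hmt : m ≤ t + 1 := by
    by_contra hc
    push_neg at hc
    have h1 : 2*k*k*(t+2) ≤ 2*k*k*m := Nat.mul_le_mul_left _ (by omega)
    have h2 : 2*k*k*(t+2) ≤ (k+1)*(2*k+(K-1)) := le_trans h1 hmK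
    have hKm : K - 1 = 2*t := by omega
    rw [hKm] at h2
    nlinarith [h2, hk, Nat.mul_le_mul_right t (Nat.mul_le_mul_right k hk),
      Nat.mul_le_mul_right k hk]
  have hno' : ∀ p : List V, IsAugPath G M p → ¬(p.length ≤ 2*t + 2) := by
    intro p hp hl
    exact hno p hp (by omega)
  obtain ⟨TA, hTA, hcA⟩ := growth G A B hAB hbip (by omega) hreg t M hM hno'
  have hAB' : ∀ v : V, ¬(v ∈ B ∧ v ∈ A) := fun v h => hAB v ⟨h.2, h.1⟩
  have hbip' : ∀ u v : V, G.Adj u v → (u ∈ B ∧ v ∈ A) ∨ (u ∈ A ∧ v ∈ B) :=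
    fun u v h => (hbip u v h).symm
  obtain ⟨TB, hTB, hcB⟩ := growth G B A hAB' hbip' (by omega) hreg t M hM hno'
  have hdisj : Disjoint TA TB := by
    rw [Finset.disjoint_left]
    intro a ha hb
    exact hAB a ⟨hTA ha, hTB hb⟩
  have hsum : TA.card + TB.card ≤ Fintype.card V := by
    rw [← Finset.card_union_of_disjoint hdisj]
    exact Finset.card_le_univ _
  have hsplit : (uncov M).card =
      ((uncov M).filter (· ∈ A)).card + ((uncov M).filter (· ∈ B)).card := by
    have hBA : (uncov M).filter (· ∈ B) = (uncov M).filter (fun x => ¬ x ∈ A) := by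
      apply Finset.filter_congr
      intro x _
      exact ⟨fun hb ha => hAB x ⟨ha, hb⟩, fun hna => (hpart x).resolve_left hna⟩
    rw [hBA, Finset.card_filter_add_card_filter_not]
  calc m * (uncov M).card ≤ (t+1) * (uncov M).card := Nat.mul_le_mul hmt le_rfl
  _ = (t+1) * ((uncov M).filter (· ∈ A)).card
      + (t+1) * ((uncov M).filter (· ∈ B)).card := by rw [hsplit, Nat.mul_add]
  _ ≤ TA.card + TB.card := Nat.add_le_add hcA hcB
  _ ≤ Fintype.card V := hsum
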